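/- Let n ≥ 3 with n ≡ 0 (mod 3). The set S = {0, 3, 6, …, n−3} ∪ {n−1} is a decycling set of the square of the n-cycle Cₙ² of cardinality n/3 + 1; indeed, the subgraph of Cₙ² induced on the complement of S is a path, hence acyclic. -/

import Mathlib

open SimpleGraph

/-- `S` is a decycling set of `G` if the subgraph of `G` induced on the complement of `S`
is acyclic. -/
def SimpleGraph.IsDecyclingSet {V : Type*} (G : SimpleGraph V) (S : Set V) : Prop :=
  (G.induce Sᶜ).IsAcyclic

/-- The decycling number `∇(G)` of `G`: the minimum cardinality of a decycling set of `G`. -/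
noncomputable def SimpleGraph.decyclingNumber {V : Type*} (G : SimpleGraph V) : ℕ :=
  sInf {k | ∃ S : Set V, G.IsDecyclingSet S ∧ S.ncard = k}

/-- The square `Cₙ²` of the `n`-cycle: vertex set `ZMod n`, with `i` adjacent to `j` iff
`i ≠ j` and `i - j ≡ ±1` or `±2 (mod n)`. -/
def cycleSquare (n : ℕ) : SimpleGraph (ZMod n) where
  Adj i j := i ≠ j ∧ (i - j = 1 ∨ j - i = 1 ∨ i - j = 2 ∨ j - i = 2)
  symm := ⟨by intro i j ⟨h, hd⟩; exact ⟨h.symm, by tauto⟩⟩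
  loopless := ⟨by intro i ⟨h, _⟩; exact h rfl⟩

/-- A graph embedding (on vertices) into the path structure on `ℕ` forces acyclicity. -/
lemma acyclic_of_nat_path {V : Type*} (G : SimpleGraph V) (f : V → ℕ)
    (hinj : Function.Injective f)
    (hadj : ∀ u v, G.Adj u v → f u + 1 = f v ∨ f v + 1 = f u) : G.IsAcyclic := by
  rw [isAcyclic_iff_forall_adj_isBridge]
  have H : ∀ v w, G.Adj v w → f v + 1 = f w →
      ¬(G \ SimpleGraph.fromEdgeSet {s(v, w)}).Reachable v w := by
    intro v w hvw hf hr
    obtain ⟨p⟩ := hr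
    have key : ∀ x y, (G \ SimpleGraph.fromEdgeSet {s(v, w)}).Walk x y →
        f x ≤ f v → f y ≤ f v := by
      intro x y q
      induction q with
      | nil => exact fun h => h
      | cons h q ih =>
        rename_i a b c
        intro hx
        apply ih
        rw [sdiff_adj, fromEdgeSet_adj] at h
        obtain ⟨hG, hne⟩ := h
        have hne' : s(a, b) ≠ s(v, w) := by
          intro he; exact hne ⟨he, hG.ne⟩
        rcases hadj a b hG with h1 | h1
        · rcases Nat.lt_or_ge (f a) (f v) with h2 | h2
          · omega
          · have hav : f a = f v := le_antisymm hx h2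
            have : a = v := hinj hav
            have : b = w := hinj (by omega)
            exact absurd (by simp [‹a = v›, ‹b = w›]) hne'
        · omega
    have := key v w p le_rfl
    omega
  intro v w hvw
  rw [isBridge_iff]
  rcases hadj v w hvw with h | h
  · exact H v w hvw h
  · refine fun hr => H w v hvw.symm h ?_
    rw [Sym2.eq_swap]
    exact hr.symm

lemma nat_unwrap (n a b d : ℕ) (h3 : n % 3 = 0) (hb : b < n)
    (ha3 : a % 3 ≠ 0) (hb3 : b % 3 ≠ 0) (hbn : b ≠ n - 1) (hd : d = 1 ∨ d = 2)
    (h : a = (b + d) % n) : a = b + d := by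
  rcases Nat.lt_or_ge (b + d) n with h2 | h2
  · rwa [Nat.mod_eq_of_lt h2] at h
  · have h4 : b + d - n < n := by omega
    rw [Nat.mod_eq_sub_mod h2, Nat.mod_eq_of_lt h4] at h
    omega

/-- For `n ≥ 3` with `n ≡ 0 (mod 3)`, the set `S = {0, 3, 6, …, n−3} ∪ {n−1}` is a decycling
set of `Cₙ²` of cardinality `n/3 + 1`. -/
theorem cycleSquare_explicit_decyclingSet (n : ℕ) (hn : 3 ≤ n) (h3 : n % 3 = 0) :
    (cycleSquare n).IsDecyclingSet
        (((fun k : ℕ => ((3 * k : ℕ) : ZMod n)) '' {k | k < n / 3}) ∪ {((n - 1 : ℕ) : ZMod n)}) ∧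
      (((fun k : ℕ => ((3 * k : ℕ) : ZMod n)) '' {k | k < n / 3}) ∪
          {((n - 1 : ℕ) : ZMod n)}).ncard = n / 3 + 1 := by
  haveI : NeZero n := ⟨by omega⟩
  set S : Set (ZMod n) :=
    ((fun k : ℕ => ((3 * k : ℕ) : ZMod n)) '' {k | k < n / 3}) ∪ {((n - 1 : ℕ) : ZMod n)} with hS
  -- membership characterization
  have hval3 : ∀ k : ℕ, k < n / 3 → ((3 * k : ℕ) : ZMod n).val = 3 * k := by
    intro k hk
    exact ZMod.val_cast_of_lt (by omega)
  have hvaln : ((n - 1 : ℕ) : ZMod n).val = n - 1 := ZMod.val_cast_of_lt (by omega)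
  have hmem : ∀ x : ZMod n, x ∈ S ↔ (x.val % 3 = 0 ∨ x.val = n - 1) := by
    intro x
    constructor
    · rintro (⟨k, hk, rfl⟩ | hx)
      · left; rw [hval3 k hk]; omega
      · right; rw [Set.mem_singleton_iff] at hx; rw [hx, hvaln]
    · intro hx
      rcases hx with hx | hx
      · left
        refine ⟨x.val / 3, ?_, ?_⟩
        · have := ZMod.val_lt x; simp only [Set.mem_setOf_eq]; omega
        · simp only
          have : 3 * (x.val / 3) = x.val := by omega
          rw [this, ZMod.natCast_rightInverse x]
      · right
        rw [Set.mem_singleton_iff, ← hx, ZMod.natCast_rightInverse x]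
  have hcompl : ∀ x : ZMod n, x ∈ Sᶜ → x.val % 3 ≠ 0 ∧ x.val ≠ n - 1 := by
    intro x hx
    rw [Set.mem_compl_iff, hmem] at hx
    push_neg at hx
    exact hx
  constructor
  · -- acyclicity
    apply acyclic_of_nat_path _ (fun x : ↥Sᶜ => x.1.val - x.1.val / 3 - 1)
    · intro x y hxy
      have hx := hcompl x.1 x.2
      have hy := hcompl y.1 y.2
      have hxy' : x.1.val - x.1.val / 3 - 1 = y.1.val - y.1.val / 3 - 1 := hxy
      have : x.1.val = y.1.val := by omega
      exact Subtype.ext (ZMod.val_injective n this)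
    · intro u v h
      have h' : (cycleSquare n).Adj u.1 v.1 := h
      obtain ⟨hne, hd⟩ := h'
      have hu := hcompl u.1 u.2
      have hv := hcompl v.1 v.2
      have huv : u.1.val < n := ZMod.val_lt _
      have hvv : v.1.val < n := ZMod.val_lt _
      have conv : ∀ x y : ZMod n, ∀ d : ℕ, d = 1 ∨ d = 2 → x - y = (d : ℕ) →
          x.val = (y.val + d) % n := by
        intro x y d hdv hsub
        have hx : x = y + (d : ℕ) := by rw [← hsub]; ring
        rw [hx, ZMod.val_add, ZMod.val_cast_of_lt (by omega)]
      have key : u.1.val = v.1.val + 1 ∨ v.1.val = u.1.val + 1 ∨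
          u.1.val = v.1.val + 2 ∨ v.1.val = u.1.val + 2 := by
        rcases hd with h1 | h1 | h1 | h1
        · left
          exact nat_unwrap n _ _ 1 h3 hvv hu.1 hv.1 hv.2 (Or.inl rfl)
            (conv u.1 v.1 1 (Or.inl rfl) (by exact_mod_cast h1))
        · right; left
          exact nat_unwrap n _ _ 1 h3 huv hv.1 hu.1 hu.2 (Or.inl rfl)
            (conv v.1 u.1 1 (Or.inl rfl) (by exact_mod_cast h1))
        · right; right; left
          exact nat_unwrap n _ _ 2 h3 hvv hu.1 hv.1 hv.2 (Or.inr rfl)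
            (conv u.1 v.1 2 (Or.inr rfl) (by exact_mod_cast h1))
        · right; right; right
          exact nat_unwrap n _ _ 2 h3 huv hv.1 hu.1 hu.2 (Or.inr rfl)
            (conv v.1 u.1 2 (Or.inr rfl) (by exact_mod_cast h1))
      omega
  · -- cardinality
    have hinjOn : Set.InjOn (fun k : ℕ => ((3 * k : ℕ) : ZMod n)) {k | k < n / 3} := by
      intro a ha b hb hab
      have := congrArg ZMod.val hab
      rw [hval3 a ha, hval3 b hb] at this
      omega
    have hnotmem : ((n - 1 : ℕ) : ZMod n) ∉
        (fun k : ℕ => ((3 * k : ℕ) : ZMod n)) '' {k | k < n / 3} := by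
      rintro ⟨k, hk, hkeq⟩
      have := congrArg ZMod.val hkeq
      rw [hval3 k hk, hvaln] at this
      omega
    rw [hS, Set.ncard_union_eq (Set.disjoint_singleton_right.mpr hnotmem)
      (Set.toFinite _) (Set.toFinite _), Set.ncard_image_of_injOn hinjOn,
      Set.ncard_singleton]
    congr 1
    have : {k : ℕ | k < n / 3} = ↑(Finset.range (n / 3)) := by ext k; simp
    rw [this, Set.ncard_coe_finset, Finset.card_range]
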